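/- Let P be an equiangular convex polygon with n sides, and let Q be a regular n-gon contained in P whose sides are parallel to the corresponding sides of P. Then for every point p in the interior of Q, the sum of distances from p to the side-lines of P equals the (constant) Viviani sum of Q plus the sum of the distances between the corresponding parallel side-lines of P and Q; consequently the sum of distances from an interior point of P to the side-lines of P is constant on all of P. -/

import Mathlib

open Metric
open scoped InnerProductSpace

noncomputable section

abbrev E2 := EuclideanSpace ℝ (Fin 2)

/-- The line `{q : αᵢ·q + γᵢ = 0}` in ℝ². -/
def line2 (a : E2) (γ : ℝ) : Set E2 := {q : E2 | ⟪a, q⟫_ℝ + γ = 0}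

/-- The sum of the distances from `p` to the lines `Lᵢ`. -/
def sumDist {n : ℕ} (a : Fin n → E2) (γ : Fin n → ℝ) (p : E2) : ℝ :=
  ∑ i, infDist p (line2 (a i) (γ i))

lemma infDist_line2 (a : E2) (ha : a ≠ 0) (γ : ℝ) (p : E2) :
    infDist p (line2 a γ) = |⟪a, p⟫_ℝ + γ| / ‖a‖ := by
  have hna : (0:ℝ) < ‖a‖ := norm_pos_iff.mpr ha
  set q : E2 := p - ((⟪a, p⟫_ℝ + γ) / ‖a‖ ^ 2) • a with hq
  have hqmem : q ∈ line2 a γ := by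
    simp only [line2, Set.mem_setOf_eq, hq, inner_sub_right, real_inner_smul_right,
      real_inner_self_eq_norm_sq]
    field_simp
    ring
  have hdist : dist p q = |⟪a, p⟫_ℝ + γ| / ‖a‖ := by
    rw [dist_eq_norm, hq]
    simp only [sub_sub_cancel, norm_smul, Real.norm_eq_abs, abs_div]
    rw [abs_of_nonneg (by positivity : (0:ℝ) ≤ ‖a‖ ^ 2)]
    field_simp
  refine le_antisymm (hdist ▸ infDist_le_dist_of_mem hqmem) (le_of_not_gt fun hlt => ?_)
  obtain ⟨y, hy, hdy⟩ := (infDist_lt_iff ⟨q, hqmem⟩).mp hlt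
  refine absurd hdy (not_lt.mpr ?_)
  have hy' : ⟪a, y⟫_ℝ = -γ := by
    have := hy; simp only [line2, Set.mem_setOf_eq] at this; linarith
  have h1 : |⟪a, p⟫_ℝ + γ| = |⟪a, p - y⟫_ℝ| := by
    rw [inner_sub_right, hy']; ring_nf
  rw [h1, div_le_iff₀ hna, dist_eq_norm]
  calc |⟪a, p - y⟫_ℝ| ≤ ‖a‖ * ‖p - y‖ := abs_real_inner_le_norm a (p - y)
    _ = dist p y * ‖a‖ := by rw [dist_eq_norm]; ring

/-- Let `K` be the region of an equiangular convex polygon with side lines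
`Lᵢ = {q : aᵢ·q + γᵢ = 0}` (`K` on the nonnegative side of each), and let `Q ⊆ K` be the
region of a regular polygon, with side lines `Mᵢ = {q : aᵢ·q + γ'ᵢ = 0}` parallel to the
corresponding side lines of `K`, whose half-planes contain those of `Q` (`γ'ᵢ ≤ γᵢ`),
and whose Viviani sum is constant on its nonempty interior. Then for every `p` in the
interior of `Q`, the sum of distances from `p` to the side lines of `K` equals the
Viviani sum of `Q` at `p` plus the sum `Σ (γᵢ - γ'ᵢ)/‖aᵢ‖` of the distances between the
corresponding parallel side lines; consequently the sum of distances to the side lines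
of `K` is constant on the interior of `K`. -/
theorem equiangular_viviani {n : ℕ} (a : Fin n → E2) (γ γ' : Fin n → ℝ)
    (ha : ∀ i, a i ≠ 0)
    (K Q : Set E2) (hK : Convex ℝ K) (hQ : Convex ℝ Q) (hQK : Q ⊆ K)
    (hQint : (interior Q).Nonempty)
    (hsideK : ∀ i, ∀ p ∈ K, 0 ≤ ⟪a i, p⟫_ℝ + γ i)
    (hsideQ : ∀ i, ∀ p ∈ Q, 0 ≤ ⟪a i, p⟫_ℝ + γ' i)
    (hbetween : ∀ i, γ' i ≤ γ i)
    (hQviviani : ∀ p ∈ interior Q, ∀ q ∈ interior Q, sumDist a γ' p = sumDist a γ' q) :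
    (∀ p ∈ interior Q,
      sumDist a γ p = sumDist a γ' p + ∑ i, (γ i - γ' i) / ‖a i‖) ∧
    (∀ p ∈ interior K, ∀ q ∈ interior K, sumDist a γ p = sumDist a γ q) := by
  set v : E2 := ∑ i, (‖a i‖⁻¹ : ℝ) • a i with hv
  have hvin : ∀ p : E2, ⟪v, p⟫_ℝ = ∑ i, ⟪a i, p⟫_ℝ / ‖a i‖ := by
    intro p
    rw [hv, sum_inner]
    exact Finset.sum_congr rfl fun i _ => by
      rw [real_inner_smul_left]; ring
  have key : ∀ (γ0 : Fin n → ℝ) (S : Set E2), (∀ i, ∀ p ∈ S, 0 ≤ ⟪a i, p⟫_ℝ + γ0 i) →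
      ∀ p ∈ S, sumDist a γ0 p = ⟪v, p⟫_ℝ + ∑ i, γ0 i / ‖a i‖ := by
    intro γ0 S hside p hp
    rw [sumDist, hvin, ← Finset.sum_add_distrib]
    refine Finset.sum_congr rfl fun i _ => ?_
    rw [infDist_line2 (a i) (ha i), abs_of_nonneg (hside i p hp), add_div]
  -- v = 0
  obtain ⟨p₀, hp₀⟩ := hQint
  have hv0 : v = 0 := by
    obtain ⟨ε, hε, hball⟩ := Metric.isOpen_iff.mp isOpen_interior p₀ hp₀
    have ht : 0 < ε / (2 * (‖v‖ + 1)) := by positivity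
    set t := ε / (2 * (‖v‖ + 1)) with htdef
    have hq : p₀ + t • v ∈ interior Q := by
      apply hball
      rw [Metric.mem_ball, dist_eq_norm, add_sub_cancel_left, norm_smul,
        Real.norm_eq_abs, abs_of_pos ht]
      calc t * ‖v‖ < t * (2 * (‖v‖ + 1)) := by
              apply mul_lt_mul_of_pos_left _ ht; nlinarith [norm_nonneg v]
        _ = ε := by
              rw [htdef, div_mul_cancel₀]
              positivity
    have h1 := hQviviani p₀ hp₀ (p₀ + t • v) hq
    rw [key γ' Q hsideQ p₀ (interior_subset hp₀),
      key γ' Q hsideQ _ (interior_subset hq)] at h1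
    have h2 : ⟪v, p₀⟫_ℝ = ⟪v, p₀ + t • v⟫_ℝ := by linarith
    rw [inner_add_right, real_inner_smul_right, real_inner_self_eq_norm_sq] at h2
    have h3 : t * ‖v‖ ^ 2 = 0 := by linarith
    have h4 : ‖v‖ ^ 2 = 0 := (mul_eq_zero.mp h3).resolve_left ht.ne'
    exact norm_eq_zero.mp (pow_eq_zero_iff (by norm_num)|>.mp h4)
  constructor
  · intro p hp
    have hpQ : p ∈ Q := interior_subset hp
    rw [key γ K hsideK p (hQK hpQ), key γ' Q hsideQ p hpQ]
    rw [add_assoc, ← Finset.sum_add_distrib]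
    congr 1
    exact Finset.sum_congr rfl fun i _ => by rw [← add_div, add_sub_cancel]
  · intro p hp q hq
    rw [key γ K hsideK p (interior_subset hp), key γ K hsideK q (interior_subset hq),
      hv0]
    simp
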